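/- Let (P_n) satisfy the symmetric recurrence x P_n(x) = b_n P_{n+1}(x) + b_{n−1} P_{n−1}(x) with b₀ = 1, b_n > 0, and assume b_{n−1} + 1 ≤ b_n for all n ≥ 1. Setting u_n = |P_n(i)|, one has max(u_{2n}, u_{2n+1}) ≤ ∏_{k=1}^n max((1 + b_{2k−2})/b_{2k−1}, (1 + b_{2k−1})/b_{2k}) for all n ≥ 0. -/

import Mathlib

open MeasureTheory Polynomial Finset

noncomputable def vaux (b : ℕ → ℝ) : ℕ → ℝ
  | 0 => 1
  | 1 => 1
  | (n+2) => (vaux b (n+1) + b n * vaux b n) / b (n+1)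

lemma vaux_pos (b : ℕ → ℝ) (hbpos : ∀ n, 0 < b n) : ∀ n, 0 < vaux b n := by
  have h : ∀ n, 0 < vaux b n ∧ 0 < vaux b (n+1) := by
    intro n
    induction n with
    | zero => constructor <;> norm_num [vaux]
    | succ n ih =>
      refine ⟨ih.2, ?_⟩
      show 0 < (vaux b (n+1) + b n * vaux b n) / b (n+1)
      have := hbpos n
      have := hbpos (n+1)
      have := ih.1
      have := ih.2
      positivity
  exact fun n => (h n).1

lemma vaux_bound (b : ℕ → ℝ) (hbpos : ∀ n, 0 < b n)
    (hgrow : ∀ n, b n + 1 ≤ b (n+1)) :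
    ∀ n : ℕ, max (vaux b (2*n)) (vaux b (2*n+1)) ≤
      ∏ k ∈ Finset.Icc 1 n,
        max ((1 + b (2*k-2)) / b (2*k-1)) ((1 + b (2*k-1)) / b (2*k)) := by
  intro n
  induction n with
  | zero => norm_num [vaux]
  | succ n ih =>
    set v := vaux b with hv
    set Mn := max (v (2*n)) (v (2*n+1)) with hMn
    set A := (1 + b (2*n)) / b (2*n+1) with hA
    set B := (1 + b (2*n+1)) / b (2*n+2) with hB
    have hMpos : 0 < Mn := lt_max_of_lt_left (vaux_pos b hbpos _)
    have h1 : v (2*n+1) ≤ Mn := le_max_right _ _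
    have h2 : v (2*n) ≤ Mn := le_max_left _ _
    have hv2 : v (2*n+2) ≤ A * Mn := by
      have : v (2*n+2) = (v (2*n+1) + b (2*n) * v (2*n)) / b (2*n+1) := rfl
      rw [this]
      have : (v (2*n+1) + b (2*n) * v (2*n)) / b (2*n+1)
          ≤ (Mn + b (2*n) * Mn) / b (2*n+1) := by
        gcongr
        · exact (hbpos _).le
        · exact (hbpos _).le
      calc (v (2*n+1) + b (2*n) * v (2*n)) / b (2*n+1)
          ≤ (Mn + b (2*n) * Mn) / b (2*n+1) := this
        _ = A * Mn := by rw [hA]; ring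
    have hA1 : A ≤ 1 := by
      rw [hA, div_le_one (hbpos _)]
      linarith [hgrow (2*n)]
    have hv2' : v (2*n+2) ≤ Mn := hv2.trans (by nlinarith)
    have hv3 : v (2*n+3) ≤ B * Mn := by
      have : v (2*n+3) = (v (2*n+2) + b (2*n+1) * v (2*n+1)) / b (2*n+2) := rfl
      rw [this]
      have : (v (2*n+2) + b (2*n+1) * v (2*n+1)) / b (2*n+2)
          ≤ (Mn + b (2*n+1) * Mn) / b (2*n+2) := by
        gcongr
        · exact (hbpos _).le
        · exact (hbpos _).le
      calc (v (2*n+2) + b (2*n+1) * v (2*n+1)) / b (2*n+2)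
          ≤ (Mn + b (2*n+1) * Mn) / b (2*n+2) := this
        _ = B * Mn := by rw [hB]; ring
    have hApos : 0 < A := div_pos (by linarith [hbpos (2*n)]) (hbpos _)
    have hmaxAB : 0 ≤ max A B := le_max_of_le_left hApos.le
    have hstep : max (v (2*(n+1))) (v (2*(n+1)+1)) ≤ max A B * Mn := by
      have e1 : 2*(n+1) = 2*n+2 := by ring
      rw [e1]
      refine max_le ?_ ?_
      · exact hv2.trans (mul_le_mul_of_nonneg_right (le_max_left _ _) hMpos.le)
      · exact hv3.trans (mul_le_mul_of_nonneg_right (le_max_right _ _) hMpos.le)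
    have hprod : ∏ k ∈ Finset.Icc 1 (n+1),
        max ((1 + b (2*k-2)) / b (2*k-1)) ((1 + b (2*k-1)) / b (2*k))
        = (∏ k ∈ Finset.Icc 1 n,
            max ((1 + b (2*k-2)) / b (2*k-1)) ((1 + b (2*k-1)) / b (2*k))) * max A B := by
      rw [Finset.prod_Icc_succ_top (by omega)]
      congr 1
    rw [hprod]
    calc max (v (2*(n+1))) (v (2*(n+1)+1)) ≤ max A B * Mn := hstep
      _ ≤ max A B * (∏ k ∈ Finset.Icc 1 n,
            max ((1 + b (2*k-2)) / b (2*k-1)) ((1 + b (2*k-1)) / b (2*k))) :=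
          mul_le_mul_of_nonneg_left ih hmaxAB
      _ = _ := mul_comm _ _

theorem abs_orthonormal_at_i_product_bound
    (μ : Measure ℝ) [IsProbabilityMeasure μ]
    (hsym : Measure.map (fun x : ℝ => -x) μ = μ)
    (hmom : ∀ n : ℕ, Integrable (fun x => x ^ n) μ)
    (hsupp : ∀ p : Polynomial ℝ, p ≠ 0 → 0 < ∫ x, (p.eval x) ^ 2 ∂μ)
    (P : ℕ → Polynomial ℝ)
    (hdeg : ∀ n, (P n).natDegree = n)
    (hlead : ∀ n, 0 < (P n).leadingCoeff)
    (horth : ∀ n m, ∫ x, (P n).eval x * (P m).eval x ∂μ = if n = m then 1 else 0)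
    (b : ℕ → ℝ) (hbpos : ∀ n, 0 < b n) (hb0 : b 0 = 1)
    (hgrow : ∀ n, 1 ≤ n → b (n - 1) + 1 ≤ b n)
    (hrec0 : (X : Polynomial ℝ) * P 0 = C (b 0) * P 1)
    (hrec : ∀ n, 1 ≤ n →
      (X : Polynomial ℝ) * P n = C (b n) * P (n + 1) + C (b (n - 1)) * P (n - 1))
    (u : ℕ → ℝ) (hu : ∀ n, u n = ‖Polynomial.aeval Complex.I (P n)‖) :
    ∀ n : ℕ, max (u (2 * n)) (u (2 * n + 1)) ≤
      ∏ k ∈ Finset.Icc 1 n,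
        max ((1 + b (2 * k - 2)) / b (2 * k - 1)) ((1 + b (2 * k - 1)) / b (2 * k)) := by
  have hgrow' : ∀ n, b n + 1 ≤ b (n+1) := by
    intro n
    have := hgrow (n+1) (by omega)
    simpa using this
  -- P 0 = 1
  have h0 : P 0 = C 1 := by
    have hc := Polynomial.eq_C_of_natDegree_eq_zero (hdeg 0)
    set c := (P 0).coeff 0 with hcdef
    have hcpos : 0 < c := by
      have := hlead 0
      rwa [hc, leadingCoeff_C] at this
    have h1 := horth 0 0
    rw [if_pos rfl, hc] at h1
    simp only [eval_C] at h1
    rw [integral_const] at h1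
    simp [measure_univ] at h1
    have hc1 : c = 1 := by nlinarith
    rw [hc, hc1]
  -- aeval I (P n) = I^n * v n
  have key : ∀ n, (Polynomial.aeval Complex.I (P n)) = Complex.I ^ n * (vaux b n : ℂ) := by
    have h01 : (Polynomial.aeval Complex.I (P 0)) = Complex.I ^ 0 * (vaux b 0 : ℂ)
        ∧ (Polynomial.aeval Complex.I (P 1)) = Complex.I ^ 1 * (vaux b 1 : ℂ) := by
      constructor
      · simp [h0, vaux]
      · have := congrArg (Polynomial.aeval Complex.I) hrec0
        simp [h0, hb0, vaux] at this ⊢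
        simpa using this.symm
    have hpair : ∀ n, (Polynomial.aeval Complex.I (P n)) = Complex.I ^ n * (vaux b n : ℂ)
        ∧ (Polynomial.aeval Complex.I (P (n+1))) = Complex.I ^ (n+1) * (vaux b (n+1) : ℂ) := by
      intro n
      induction n with
      | zero => exact h01
      | succ n ih =>
        refine ⟨ih.2, ?_⟩
        have hr := hrec (n+1) (by omega)
        simp only [Nat.add_sub_cancel] at hr
        have hae := congrArg (Polynomial.aeval Complex.I) hr
        simp only [map_mul, map_add, aeval_X, aeval_C, Complex.coe_algebraMap] at hae
        have hb1 : (b (n+1) : ℂ) ≠ 0 := by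
          exact_mod_cast (hbpos (n+1)).ne'
        have hvdef : vaux b (n+2) = (vaux b (n+1) + b n * vaux b n) / b (n+1) := rfl
        rw [ih.1, ih.2] at hae
        have : (Polynomial.aeval Complex.I (P (n+2)))
            = (Complex.I * (Complex.I ^ (n+1) * (vaux b (n+1) : ℂ))
              - (b n : ℂ) * (Complex.I ^ n * (vaux b n : ℂ))) / (b (n+1) : ℂ) := by
          field_simp
          linear_combination hae.symm
        have hI : Complex.I ^ (n+2) = -(Complex.I ^ n) := by
          rw [pow_add]
          simp [Complex.I_sq]
        have hnum : Complex.I * (Complex.I ^ (n+1) * (vaux b (n+1) : ℂ))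
            - (b n : ℂ) * (Complex.I ^ n * (vaux b n : ℂ))
            = Complex.I ^ (n+2) * ((vaux b (n+1) : ℂ) + (b n : ℂ) * (vaux b n : ℂ)) := by
          linear_combination (-(b n : ℂ) * (vaux b n : ℂ)) * hI
        rw [this, hvdef]
        push_cast
        rw [hnum]
        ring
    exact fun n => (hpair n).1
  have hueq : ∀ n, u n = vaux b n := by
    intro n
    rw [hu, key]
    rw [norm_mul, norm_pow, Complex.norm_I, one_pow, one_mul, Complex.norm_real, Real.norm_eq_abs,
      abs_of_pos (vaux_pos b hbpos n)]
  intro n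
  rw [hueq, hueq]
  exact vaux_bound b hbpos hgrow' n
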